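/- arXiv:1603.09205 — 8 statements merged into one kernel-verified Lean document; each statement's English description precedes it below -/
import Mathlib

section
/- (Reciprocal pointer chain theorem) For any two vertices u, v ∈ V, the cascading via-paths p̃_{s,u,t} and p̃_{s,v,t} are equal if and only if u and v are connected by a reciprocal pointer chain, i.e., there exists an RPC whose first vertex is one of u, v and whose last vertex is the other. -/
variable {V : Type*}

/-- `p` is a path from `u` to `w` in the digraph with edge relation `E`:
a nonempty finite sequence of vertices beginning at `u` and ending at `w`
in which every consecutive pair of vertices is an edge. -/
def IsPath (E : V → V → Prop) (p : List V) (u w : V) : Prop :=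
  p ≠ [] ∧ p.head? = some u ∧ p.getLast? = some w ∧ p.Chain' E

/-- The cost of a path: the sum of the weights of its edges. -/
def pathCost (c : V → V → ℝ) (p : List V) : ℝ :=
  ((p.zip p.tail).map fun e => c e.1 e.2).sum

/-- A shortest path from `u` to `w`: a path from `u` to `w` of minimum cost. -/
def IsShortestPath (E : V → V → Prop) (c : V → V → ℝ) (p : List V) (u w : V) : Prop :=
  IsPath E p u w ∧ ∀ q, IsPath E q u w → pathCost c p ≤ pathCost c q

/-- A via-path for `v`: an `s`–`t` path of minimum cost among all `s`–`t`
paths passing through `v`. -/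
def IsViaPath (E : V → V → Prop) (c : V → V → ℝ) (s t v : V) (p : List V) : Prop :=
  IsPath E p s t ∧ v ∈ p ∧ ∀ q, IsPath E q s t → v ∈ q → pathCost c p ≤ pathCost c q

/-- The minimum cost of an `s`–`t` path passing through `v`. -/
noncomputable def viaCost (E : V → V → Prop) (c : V → V → ℝ) (s t v : V) : ℝ :=
  sInf (pathCost c '' {p | IsPath E p s t ∧ v ∈ p})

/-- A predecessor shortest path tree rooted at the source `s`: a map `b`
assigning to each vertex `v ≠ s` a vertex `b v` with an edge from `b v` to `v`,
such that iterating `b` from any `v` terminates at `s` and the resulting path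
`pathTo v` (read from `s` to `v`) is a shortest path from `s` to `v`. -/
structure PredSPT (E : V → V → Prop) (c : V → V → ℝ) (s : V) where
  b : V → V
  pathTo : V → List V
  edge : ∀ v, v ≠ s → E (b v) v
  pathTo_src : pathTo s = [s]
  pathTo_step : ∀ v, v ≠ s → pathTo v = pathTo (b v) ++ [v]
  shortest : ∀ v, IsShortestPath E c (pathTo v) s v

/-- A successor shortest path tree rooted at the target `t`: a map `f`
assigning to each vertex `v ≠ t` a vertex `f v` with an edge from `v` to `f v`,
such that iterating `f` from any `v` terminates at `t` and the resulting path
`pathFrom v` is a shortest path from `v` to `t`. -/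
structure SuccSPT (E : V → V → Prop) (c : V → V → ℝ) (t : V) where
  f : V → V
  pathFrom : V → List V
  edge : ∀ v, v ≠ t → E v (f v)
  pathFrom_tgt : pathFrom t = [t]
  pathFrom_step : ∀ v, v ≠ t → pathFrom v = v :: pathFrom (f v)
  shortest : ∀ v, IsShortestPath E c (pathFrom v) v t

variable {E : V → V → Prop} {c : V → V → ℝ} {s t : V}

/-- The cascading via-path (CVP) of a vertex `v`: the tree path `p̃_{s,v}`
followed by the tree path `p̃_{v,t}`. -/
def CVP (B : PredSPT E c s) (F : SuccSPT E c t) (v : V) : List V :=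
  B.pathTo v ++ (F.pathFrom v).tail

/-- A reciprocal pointer chain (RPC): a nonempty sequence of vertices
`(v_1, …, v_n)` such that for all `1 ≤ i < n`, `b (v_{i+1}) = v_i` and
`f (v_i) = v_{i+1}` (as pointers of the two shortest path trees, so in
particular `v_{i+1} ≠ s` and `v_i ≠ t`). -/
def IsRPC (B : PredSPT E c s) (F : SuccSPT E c t) (r : List V) : Prop :=
  r ≠ [] ∧ r.Chain' fun x y => y ≠ s ∧ x ≠ t ∧ B.b y = x ∧ F.f x = y

/-- A maximal RPC: an RPC whose set of vertices is not a (strict) subset of the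
vertex set of any other RPC. -/
def IsMaximalRPC [DecidableEq V] (B : PredSPT E c s) (F : SuccSPT E c t)
    (r : List V) : Prop :=
  IsRPC B F r ∧
    ∀ r', IsRPC B F r' → r.toFinset ⊆ r'.toFinset → r'.toFinset = r.toFinset

/-- The Jaccard distance between the vertex sets of two paths. -/
noncomputable def jaccardDist [DecidableEq V] (p q : List V) : ℝ :=
  1 - ((p.toFinset ∩ q.toFinset).card : ℝ) / ((p.toFinset ∪ q.toFinset).card : ℝ)

/-- A plateau: a nonempty sequence of vertices in which every consecutive pair
is an edge and all vertices have the same minimum via-path cost. -/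
def IsPlateau (E : V → V → Prop) (c : V → V → ℝ) (s t : V) (q : List V) : Prop :=
  q ≠ [] ∧ q.Chain' fun x y => E x y ∧ viaCost E c s t x = viaCost E c s t y

/-- A maximal plateau: a plateau whose set of vertices is not a (strict) subset
of the vertex set of any other plateau. -/
def IsMaximalPlateau [DecidableEq V] (E : V → V → Prop) (c : V → V → ℝ)
    (s t : V) (q : List V) : Prop :=
  IsPlateau E c s t q ∧
    ∀ q', IsPlateau E c s t q' → q.toFinset ⊆ q'.toFinset → q'.toFinset = q.toFinset

section RPCAux

lemma pathTo_ne_nil' (B : PredSPT E c s) (v : V) : B.pathTo v ≠ [] := (B.shortest v).1.1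

lemma pathTo_last' (B : PredSPT E c s) (v : V) : (B.pathTo v).getLast? = some v :=
  (B.shortest v).1.2.2.1

lemma pathFrom_ne_nil' (F : SuccSPT E c t) (v : V) : F.pathFrom v ≠ [] := (F.shortest v).1.1

lemma pathFrom_head' (F : SuccSPT E c t) (v : V) : (F.pathFrom v).head? = some v :=
  (F.shortest v).1.2.1

lemma pathFrom_cons' (F : SuccSPT E c t) (v : V) :
    F.pathFrom v = v :: (F.pathFrom v).tail := by
  have h := pathFrom_head' F v
  cases hl : F.pathFrom v with
  | nil => exact absurd hl (pathFrom_ne_nil' F v)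
  | cons a l => rw [hl] at h; simp at h; simp [h]

lemma cvp_step' (B : PredSPT E c s) (F : SuccSPT E c t) {x y : V}
    (hy : y ≠ s) (hx : x ≠ t) (hb : B.b y = x) (hf : F.f x = y) :
    CVP B F x = CVP B F y := by
  have h1 : F.pathFrom x = x :: F.pathFrom y := by rw [F.pathFrom_step x hx, hf]
  have h2 : B.pathTo y = B.pathTo x ++ [y] := by rw [B.pathTo_step y hy, hb]
  rw [CVP, CVP, h1, h2, List.tail_cons]
  conv_lhs => rw [pathFrom_cons' F y]
  simp

lemma rpc_cvp' (B : PredSPT E c s) (F : SuccSPT E c t) :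
    ∀ r : List V, r.Chain' (fun x y => y ≠ s ∧ x ≠ t ∧ B.b y = x ∧ F.f x = y) →
    ∀ x y, r.head? = some x → r.getLast? = some y → CVP B F x = CVP B F y := by
  intro r
  induction r with
  | nil => simp
  | cons a l ih =>
    intro hch x y hx hy
    simp only [List.head?_cons, Option.some.injEq] at hx
    subst hx
    cases l with
    | nil => simp at hy; subst hy; rfl
    | cons b' l' =>
      rw [List.Chain', List.isChain_cons_cons] at hch
      obtain ⟨⟨h1, h2, h3, h4⟩, hch'⟩ := hch
      have hrec := ih hch' b' y rfl (by simpa using hy)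
      exact (cvp_step' B F h1 h2 h3 h4).trans hrec

lemma pathTo_chain' (B : PredSPT E c s) (v : V) :
    (B.pathTo v).Chain' (fun x y => y ≠ s ∧ B.b y = x) := by
  generalize h : (B.pathTo v).length = n
  induction n using Nat.strong_induction_on generalizing v with
  | _ n ih =>
  by_cases hv : v = s
  · subst hv; rw [B.pathTo_src]; simp [List.Chain']
  · rw [B.pathTo_step v hv] at h ⊢
    have hne := pathTo_ne_nil' B (B.b v)
    have hlt : (B.pathTo (B.b v)).length < n := by
      rw [List.length_append] at h; simp at h; omega
    rw [List.Chain', List.isChain_append]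
    refine ⟨ih _ hlt (B.b v) rfl, List.isChain_singleton _, ?_⟩
    intro x hx y hy
    simp only [List.head?_cons, Option.mem_def, Option.some.injEq] at hy
    rw [Option.mem_def, pathTo_last' B (B.b v), Option.some.injEq] at hx
    subst hx; subst hy
    exact ⟨hv, rfl⟩

lemma cvp_to_rpc' (B : PredSPT E c s) (F : SuccSPT E c t) :
    ∀ n, ∀ u v : V, CVP B F u = CVP B F v →
    (B.pathTo u).length + n = (B.pathTo v).length →
    ∃ r : List V, r ≠ [] ∧
      r.Chain' (fun x y => y ≠ s ∧ x ≠ t ∧ B.b y = x ∧ F.f x = y) ∧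
      r.head? = some u ∧ r.getLast? = some v := by
  intro n
  induction n with
  | zero =>
    intro u v hcvp hlen
    rw [Nat.add_zero] at hlen
    have hu : B.pathTo u = (CVP B F u).take (B.pathTo u).length := by
      rw [CVP, List.take_left]
    have hv : B.pathTo v = (CVP B F v).take (B.pathTo v).length := by
      rw [CVP, List.take_left]
    have hpt : B.pathTo u = B.pathTo v := by rw [hu, hv, hcvp, hlen]
    have huv : u = v := by
      have h1 := pathTo_last' B u
      have h2 := pathTo_last' B v
      rw [hpt, h2] at h1
      exact (Option.some.injEq _ _ ▸ h1).symm ▸ rfl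
    subst huv
    exact ⟨[u], by simp, by simp [List.Chain'], rfl, rfl⟩
  | succ n ih =>
    intro u v hcvp hlen
    have hpv : CVP B F u = B.pathTo v ++ (F.pathFrom v).tail := by rw [hcvp]; rfl
    have hplen : (B.pathTo v).length ≤ (CVP B F u).length := by
      rw [hpv, List.length_append]; omega
    have hut : u ≠ t := by
      intro h; subst h
      have hx : CVP B F u = B.pathTo u := by
        rw [CVP, F.pathFrom_tgt]; simp
      rw [hx] at hplen
      omega
    set w := F.f u with hw
    have hfu : F.pathFrom u = u :: F.pathFrom w := F.pathFrom_step u hut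
    have hp2 : CVP B F u = B.pathTo u ++ F.pathFrom w := by
      rw [CVP, hfu, List.tail_cons]
    have hw_cons : F.pathFrom w = w :: (F.pathFrom w).tail := pathFrom_cons' F w
    have htake : (CVP B F u).take ((B.pathTo u).length + 1) = B.pathTo u ++ [w] := by
      rw [hp2, List.take_length_add_append 1, hw_cons]
      simp
    have hpref : (CVP B F u).take ((B.pathTo u).length + 1)
        = (B.pathTo v).take ((B.pathTo u).length + 1) := by
      rw [hpv, List.take_append_of_le_length (by omega)]
    have hchain : (B.pathTo u ++ [w]).Chain' (fun x y => y ≠ s ∧ B.b y = x) := by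
      rw [← htake, hpref]
      exact (pathTo_chain' B v).prefix (List.take_prefix _ _)
    rw [List.Chain', List.isChain_append] at hchain
    obtain ⟨-, -, hrel⟩ := hchain
    obtain ⟨hws, hbw⟩ := hrel u (by rw [Option.mem_def, pathTo_last' B u]) w (by simp)
    have hptw : B.pathTo w = B.pathTo u ++ [w] := by rw [B.pathTo_step w hws, hbw]
    have hcvpw : CVP B F w = CVP B F u := by
      rw [CVP, hptw, List.append_assoc, List.singleton_append, ← hw_cons, hp2]
    have hlw : (B.pathTo w).length + n = (B.pathTo v).length := by
      rw [hptw, List.length_append]; simp; omega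
    obtain ⟨r, hrne, hrch, hrh, hrl⟩ := ih w v (hcvpw.trans hcvp) hlw
    cases r with
    | nil => exact absurd rfl hrne
    | cons a r' =>
      simp only [List.head?_cons, Option.some.injEq] at hrh
      subst hrh
      refine ⟨u :: w :: r', by simp,
        List.isChain_cons_cons.mpr ⟨⟨hws, hut, hbw, rfl⟩, hrch⟩, rfl, ?_⟩
      rw [List.getLast?_cons_cons]
      exact hrl

end RPCAux

/-- Reciprocal pointer chain theorem: the CVPs of `u` and `v` are
equal if and only if `u` and `v` are connected by a reciprocal pointer chain,
i.e., there is an RPC whose first vertex is one of `u, v` and whose last vertex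
is the other. -/
theorem reciprocal_pointer_chain_theorem [Fintype V] [DecidableEq V]
    {E : V → V → Prop} {c : V → V → ℝ} {s t : V}
    (hc : ∀ u w, E u w → 0 ≤ c u w)
    (B : PredSPT E c s) (F : SuccSPT E c t) (u v : V) :
    CVP B F u = CVP B F v ↔
      ∃ r, IsRPC B F r ∧
        ((r.head? = some u ∧ r.getLast? = some v) ∨
         (r.head? = some v ∧ r.getLast? = some u)) := by
  constructor
  · intro h
    rcases le_total (B.pathTo u).length (B.pathTo v).length with hle | hle
    · obtain ⟨r, h1, h2, h3, h4⟩ :=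
        cvp_to_rpc' B F ((B.pathTo v).length - (B.pathTo u).length) u v h (by omega)
      exact ⟨r, ⟨h1, h2⟩, Or.inl ⟨h3, h4⟩⟩
    · obtain ⟨r, h1, h2, h3, h4⟩ :=
        cvp_to_rpc' B F ((B.pathTo u).length - (B.pathTo v).length) v u h.symm (by omega)
      exact ⟨r, ⟨h1, h2⟩, Or.inr ⟨h3, h4⟩⟩
  · rintro ⟨r, ⟨hne, hch⟩, h | h⟩
    · exact rpc_cvp' B F r hch u v h.1 h.2
    · exact (rpc_cvp' B F r hch v u h.1 h.2).symm
end

section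
/- If (v_1,…,v_n) is a reciprocal pointer chain, then the sequence (v_1,…,v_n) is itself a path in G from v_1 to v_n, and it is a shortest path from v_1 to v_n. -/
variable {V : Type*}

variable {E : V → V → Prop} {c : V → V → ℝ} {s t : V}

lemma pathCost_cons_cons (c : V → V → ℝ) (a b : V) (l : List V) :
    pathCost c (a :: b :: l) = c a b + pathCost c (b :: l) := by
  simp [pathCost]

lemma pathCost_append (c : V → V → ℝ) :
    ∀ (p : List V) (w : V) (l : List V), p.getLast? = some w →
      pathCost c (p ++ l) = pathCost c p + pathCost c (w :: l)
  | [], w, l, h => by simp at h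
  | [a], w, l, h => by
    simp only [List.getLast?_singleton, Option.some.injEq] at h
    subst h
    simp [pathCost]
  | a :: b :: p, w, l, h => by
    rw [List.getLast?_cons_cons] at h
    rw [List.cons_append, List.cons_append, pathCost_cons_cons,
      ← List.cons_append, pathCost_append c (b :: p) w l h, pathCost_cons_cons]
    ring

lemma isPath_append {E : V → V → Prop} {p q : List V} {u w t : V}
    (hp : IsPath E p u w) (hq : IsPath E q w t) :
    IsPath E (p ++ q.tail) u t := by
  obtain ⟨hpne, hph, hpl, hpc⟩ := hp
  obtain ⟨hqne, hqh, hql, hqc⟩ := hq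
  obtain ⟨q', rfl⟩ : ∃ q', q = w :: q' := by
    cases q with
    | nil => simp at hqh
    | cons a q' => simp at hqh; exact ⟨q', by rw [hqh]⟩
  simp only [List.tail_cons]
  cases q' with
  | nil =>
    simp only [List.getLast?_singleton, Option.some.injEq] at hql
    subst hql
    exact ⟨by simpa using hpne, by simpa using hph, by simpa using hpl, by simpa using hpc⟩
  | cons b q'' =>
    refine ⟨by simp [hpne], ?_, ?_, ?_⟩
    · cases p with
      | nil => exact absurd rfl hpne
      | cons a p' => simpa using hph
    · rw [List.getLast?_cons_cons] at hql
      rw [List.getLast?_append, hql]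
      rfl
    · rw [List.Chain', List.isChain_append]
      refine ⟨hpc, (List.isChain_cons.mp hqc).2, ?_⟩
      intro x hx y hy
      rw [hpl] at hx
      simp at hx hy
      subst hx; subst hy
      exact (List.isChain_cons.mp hqc).1 b rfl

lemma rpc_pathFrom {E : V → V → Prop} {c : V → V → ℝ} {s t : V}
    (B : PredSPT E c s) (F : SuccSPT E c t) :
    ∀ (r : List V) (u w : V),
      r.Chain' (fun x y => y ≠ s ∧ x ≠ t ∧ B.b y = x ∧ F.f x = y) →
      r.head? = some u → r.getLast? = some w →
      F.pathFrom u = r ++ (F.pathFrom w).tail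
  | [], u, w, _, hu, _ => by simp at hu
  | [a], u, w, _, hu, hw => by
    simp only [List.head?_cons, Option.some.injEq] at hu
    simp only [List.getLast?_singleton, Option.some.injEq] at hw
    subst hu; subst hw
    have h1 := (F.shortest a).1.2.1
    have h2 := List.cons_head?_tail (l := F.pathFrom a) (a := a) (by simp [h1])
    rw [List.singleton_append]
    exact h2.symm
  | a :: b :: l, u, w, hchain, hu, hw => by
    simp only [List.head?_cons, Option.some.injEq] at hu
    subst hu
    rw [List.Chain', List.isChain_cons_cons] at hchain
    obtain ⟨⟨_, hat, _, hfab⟩, hc2⟩ := hchain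
    rw [List.getLast?_cons_cons] at hw
    have IH := rpc_pathFrom B F (b :: l) b w hc2 rfl hw
    rw [F.pathFrom_step a hat, hfab, IH]
    simp

/-- A reciprocal pointer chain `(v_1, …, v_n)` is itself a path in
`G` from `v_1` to `v_n`, and it is a shortest path from `v_1` to `v_n`. -/
theorem rpc_is_shortest_path [Fintype V] [DecidableEq V]
    {E : V → V → Prop} {c : V → V → ℝ} {s t : V}
    (hc : ∀ u w, E u w → 0 ≤ c u w)
    (B : PredSPT E c s) (F : SuccSPT E c t)
    (r : List V) (hr : IsRPC B F r) (u w : V)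
    (hu : r.head? = some u) (hw : r.getLast? = some w) :
    IsShortestPath E c r u w := by
  obtain ⟨hrne, hrc⟩ := hr
  have hpathr : IsPath E r u w := by
    refine ⟨hrne, hu, hw, ?_⟩
    refine hrc.imp ?_
    rintro x y ⟨hys, hxt, hb, hf⟩
    have := F.edge x hxt
    rwa [hf] at this
  have hkey := rpc_pathFrom B F r u w hrc hu hw
  have hwhead : w :: (F.pathFrom w).tail = F.pathFrom w := by
    have h1 := (F.shortest w).1.2.1
    exact List.cons_head?_tail (by simp [h1])
  have hcost : pathCost c (F.pathFrom u) = pathCost c r + pathCost c (F.pathFrom w) := by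
    rw [hkey, pathCost_append c r w _ hw, hwhead]
  refine ⟨hpathr, fun q hq => ?_⟩
  have hqpath : IsPath E (q ++ (F.pathFrom w).tail) u t :=
    isPath_append hq (F.shortest w).1
  have hle := (F.shortest u).2 _ hqpath
  rw [hcost, pathCost_append c q w _ hq.2.2.1, hwhead] at hle
  linarith
end

section
/- A reciprocal pointer chain cannot contain a loop: if (v_1,…,v_n) is an RPC, then all of the vertices v_1,…,v_n are pairwise distinct. -/
variable {V : Type*}

variable {E : V → V → Prop} {c : V → V → ℝ} {s t : V}

/-- A reciprocal pointer chain cannot contain a loop: all of its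
vertices are pairwise distinct. -/
theorem rpc_nodup [Fintype V] [DecidableEq V]
    {E : V → V → Prop} {c : V → V → ℝ} {s t : V}
    (hc : ∀ u w, E u w → 0 ≤ c u w)
    (B : PredSPT E c s) (F : SuccSPT E c t)
    (r : List V) (hr : IsRPC B F r) :
    r.Nodup := by
  obtain ⟨-, hchain⟩ := hr
  have hmono : r.Chain' fun x y =>
      (B.pathTo x).length < (B.pathTo y).length := by
    refine hchain.imp ?_
    rintro x y ⟨hy, -, hb, -⟩
    have := B.pathTo_step y hy
    rw [hb] at this
    rw [this, List.length_append]
    simp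
  have : IsTrans V fun x y => (B.pathTo x).length < (B.pathTo y).length :=
    ⟨fun _ _ _ => lt_trans⟩
  have hpw := List.isChain_iff_pairwise.mp hmono
  exact hpw.imp fun h => by rintro rfl; exact lt_irrefl _ h
end

section
/- (Maximal RPC disjointness theorem) If R_1 and R_2 are maximal reciprocal pointer chains whose vertex sets are not equal, then their vertex sets are disjoint. -/
variable {V : Type*}

variable {E : V → V → Prop} {c : V → V → ℝ} {s t : V}

/-- Two chains starting at the same vertex: one is a prefix of the other,
provided the relation is forward-deterministic. -/
lemma chain'_prefix_or_prefix {S : V → V → Prop}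
    (hdet : ∀ x y y', S x y → S x y' → y = y') :
    ∀ (l₁ l₂ : List V) (v : V), l₁.Chain' S → l₂.Chain' S →
      l₁.head? = some v → l₂.head? = some v → l₁ <+: l₂ ∨ l₂ <+: l₁
  | [], l₂, v, _, _, h, _ => by simp at h
  | l₁, [], v, _, _, _, h => by simp at h
  | [a], b :: l₂, v, _, _, h₁, h₂ => by
      simp at h₁ h₂; subst h₁; subst h₂
      exact Or.inl ⟨l₂, rfl⟩
  | a :: a' :: l₁, [b], v, _, _, h₁, h₂ => by
      simp at h₁ h₂; subst h₁; subst h₂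
      exact Or.inr ⟨a' :: l₁, rfl⟩
  | a :: a' :: l₁, b :: b' :: l₂, v, hc₁, hc₂, h₁, h₂ => by
      simp at h₁ h₂; subst h₁; subst h₂
      unfold List.Chain' at hc₁ hc₂
      rw [List.isChain_cons_cons] at hc₁ hc₂
      have hab : a' = b' := hdet _ a' b' hc₁.1 hc₂.1
      subst hab
      rcases chain'_prefix_or_prefix hdet (a' :: l₁) (a' :: l₂) a' hc₁.2 hc₂.2
          rfl rfl with h | h
      · exact Or.inl (List.cons_prefix_cons.mpr ⟨rfl, h⟩)
      · exact Or.inr (List.cons_prefix_cons.mpr ⟨rfl, h⟩)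

/-- Two chains ending at the same vertex: one is a suffix of the other,
provided the relation is backward-deterministic. -/
lemma chain'_suffix_or_suffix {S : V → V → Prop}
    (hdet : ∀ x x' y, S x y → S x' y → x = x')
    (l₁ l₂ : List V) (v : V) (hc₁ : l₁.Chain' S) (hc₂ : l₂.Chain' S)
    (h₁ : l₁.getLast? = some v) (h₂ : l₂.getLast? = some v) :
    l₁ <:+ l₂ ∨ l₂ <:+ l₁ := by
  have hdet' : ∀ x y y', flip S x y → flip S x y' → y = y' :=
    fun x y y' h h' => hdet y y' x h h'
  have hc₁' : l₁.reverse.Chain' (flip S) := by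
    exact List.isChain_reverse.mpr hc₁
  have hc₂' : l₂.reverse.Chain' (flip S) := by
    exact List.isChain_reverse.mpr hc₂
  rcases chain'_prefix_or_prefix hdet' l₁.reverse l₂.reverse v hc₁' hc₂'
      (by rw [List.head?_reverse]; exact h₁)
      (by rw [List.head?_reverse]; exact h₂) with h | h
  · exact Or.inl (List.reverse_prefix.mp h)
  · exact Or.inr (List.reverse_prefix.mp h)

/-- Gluing two chains through a common vertex. -/
lemma chain'_glue {S : V → V → Prop} {a₁ b₁ a₂ b₂ : List V} {v : V}
    (h₁ : (a₁ ++ v :: b₁).Chain' S) (h₂ : (a₂ ++ v :: b₂).Chain' S) :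
    (a₁ ++ v :: b₂).Chain' S := by
  unfold List.Chain' at h₁ h₂ ⊢
  rw [List.isChain_append] at h₁ h₂ ⊢
  exact ⟨h₁.1, h₂.2.1,
    fun x hx y hy => h₁.2.2 x hx y (by simp at hy ⊢; exact hy.symm ▸ rfl)⟩

lemma rpc_merge {E : V → V → Prop} {c : V → V → ℝ} {s t : V}
    (B : PredSPT E c s) (F : SuccSPT E c t)
    {R₁ R₂ : List V} (h₁ : IsRPC B F R₁) (h₂ : IsRPC B F R₂)
    {v : V} (hv₁ : v ∈ R₁) (hv₂ : v ∈ R₂) :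
    ∃ r, IsRPC B F r ∧ R₁ ⊆ r ∧ R₂ ⊆ r := by
  set S : V → V → Prop := fun x y => y ≠ s ∧ x ≠ t ∧ B.b y = x ∧ F.f x = y with hS
  have hfwd : ∀ x y y', S x y → S x y' → y = y' := by
    rintro x y y' ⟨-, -, -, hy⟩ ⟨-, -, -, hy'⟩; rw [← hy, ← hy']
  have hbwd : ∀ x x' y, S x y → S x' y → x = x' := by
    rintro x x' y ⟨-, -, hx, -⟩ ⟨-, -, hx', -⟩; rw [← hx, ← hx']
  obtain ⟨a₁, b₁, rfl⟩ := List.append_of_mem hv₁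
  obtain ⟨a₂, b₂, rfl⟩ := List.append_of_mem hv₂
  have hc₁ := h₁.2
  have hc₂ := h₂.2
  -- forward chains from v
  have hf₁ : (v :: b₁).Chain' S := hc₁.suffix ⟨a₁, rfl⟩
  have hf₂ : (v :: b₂).Chain' S := hc₂.suffix ⟨a₂, rfl⟩
  -- backward chains into v
  have hb₁ : (a₁ ++ [v]).Chain' S := hc₁.prefix ⟨b₁, by simp⟩
  have hb₂ : (a₂ ++ [v]).Chain' S := hc₂.prefix ⟨b₂, by simp⟩
  have hB : b₁ <+: b₂ ∨ b₂ <+: b₁ := by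
    rcases chain'_prefix_or_prefix hfwd (v :: b₁) (v :: b₂) v hf₁ hf₂ rfl rfl with
      ⟨u, hu⟩ | ⟨u, hu⟩
    · exact Or.inl ⟨u, by simpa using hu⟩
    · exact Or.inr ⟨u, by simpa using hu⟩
  have hA : a₁ <:+ a₂ ∨ a₂ <:+ a₁ := by
    rcases chain'_suffix_or_suffix hbwd (a₁ ++ [v]) (a₂ ++ [v]) v hb₁ hb₂ (by simp)
      (by simp) with ⟨u, hu⟩ | ⟨u, hu⟩
    · exact Or.inl ⟨u, by simpa [← List.append_assoc] using hu⟩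
    · exact Or.inr ⟨u, by simpa [← List.append_assoc] using hu⟩
  -- choose the longer halves
  obtain ⟨a, ha₁, ha₂, hac⟩ : ∃ a, a₁ <:+ a ∧ a₂ <:+ a ∧ (a ++ [v]).Chain' S := by
    rcases hA with h | h
    exacts [⟨a₂, h, List.suffix_rfl, hb₂⟩, ⟨a₁, List.suffix_rfl, h, hb₁⟩]
  obtain ⟨b, hb₁', hb₂', hbc⟩ : ∃ b, b₁ <+: b ∧ b₂ <+: b ∧ (v :: b).Chain' S := by
    rcases hB with h | h
    exacts [⟨b₂, h, List.prefix_rfl, hf₂⟩, ⟨b₁, List.prefix_rfl, h, hf₁⟩]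
  refine ⟨a ++ v :: b, ⟨by simp, ?_⟩, ?_, ?_⟩
  · exact chain'_glue (a₂ := []) (b₁ := []) hac hbc
  · intro x hx
    rcases List.mem_append.mp hx with h | h
    · exact List.mem_append.mpr (Or.inl (ha₁.subset h))
    · rcases List.mem_cons.mp h with h | h
      · simp [h]
      · exact List.mem_append.mpr (Or.inr (List.mem_cons.mpr
          (Or.inr (hb₁'.subset h))))
  · intro x hx
    rcases List.mem_append.mp hx with h | h
    · exact List.mem_append.mpr (Or.inl (ha₂.subset h))
    · rcases List.mem_cons.mp h with h | h
      · simp [h]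
      · exact List.mem_append.mpr (Or.inr (List.mem_cons.mpr
          (Or.inr (hb₂'.subset h))))

/-- Maximal RPC disjointness theorem: maximal RPCs with unequal
vertex sets have disjoint vertex sets. -/
theorem maximal_rpc_disjoint [Fintype V] [DecidableEq V]
    {E : V → V → Prop} {c : V → V → ℝ} {s t : V}
    (hc : ∀ u w, E u w → 0 ≤ c u w)
    (B : PredSPT E c s) (F : SuccSPT E c t)
    (R₁ R₂ : List V) (h₁ : IsMaximalRPC B F R₁) (h₂ : IsMaximalRPC B F R₂)
    (hne : R₁.toFinset ≠ R₂.toFinset) :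
    Disjoint R₁.toFinset R₂.toFinset := by
  by_contra hd
  obtain ⟨v, hv₁, hv₂⟩ := Finset.not_disjoint_iff.mp hd
  rw [List.mem_toFinset] at hv₁ hv₂
  obtain ⟨r, hr, hsub₁, hsub₂⟩ := rpc_merge B F h₁.1 h₂.1 hv₁ hv₂
  have e₁ := h₁.2 r hr (fun x hx => List.mem_toFinset.mpr
    (hsub₁ (List.mem_toFinset.mp hx)))
  have e₂ := h₂.2 r hr (fun x hx => List.mem_toFinset.mpr
    (hsub₂ (List.mem_toFinset.mp hx)))
  exact hne (e₁ ▸ e₂)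
end

section
/- (Maximal RPC uniqueness theorem) Every vertex v ∈ V is a member of exactly one maximal reciprocal pointer chain: there exists a maximal RPC containing v, and any two maximal RPCs containing v have the same vertex set. -/
variable {V : Type*}

variable {E : V → V → Prop} {c : V → V → ℝ} {s t : V}

section AuxRPC

variable [DecidableEq V] (B : PredSPT E c s) (F : SuccSPT E c t)

/-- The single-step relation of reciprocal pointer chains. -/
def rpcStep (x y : V) : Prop :=
  y ≠ s ∧ x ≠ t ∧ B.b y = x ∧ F.f x = y

instance (x y : V) : Decidable (rpcStep B F x y) := by
  unfold rpcStep; infer_instance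

/-- Forward extension of a chain from `x` with given fuel. -/
def rpcFwd : ℕ → V → List V
  | 0, x => [x]
  | n+1, x => if rpcStep B F x (F.f x) then x :: rpcFwd n (F.f x) else [x]

/-- Backward iteration from `x` with given fuel. -/
def rpcSrc : ℕ → V → V
  | 0, x => x
  | n+1, x => if rpcStep B F (B.b x) x then rpcSrc n (B.b x) else x

/-- Rank of a vertex: the length of its predecessor tree path. -/
def rpcEll (v : V) : ℕ := (B.pathTo v).length

lemma rpcEll_pos (v : V) : 1 ≤ rpcEll B v :=
  List.length_pos_iff.mpr (B.shortest v).1.1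

lemma rpcEll_step {v : V} (hv : v ≠ s) : rpcEll B v = rpcEll B (B.b v) + 1 := by
  unfold rpcEll; rw [B.pathTo_step v hv]; simp

lemma rpcStep_ell {x y : V} (h : rpcStep B F x y) :
    rpcEll B y = rpcEll B x + 1 := by
  rw [rpcEll_step B h.1, h.2.2.1]

lemma pathTo_bound : ∀ n v, rpcEll B v ≤ n →
    (∀ x ∈ B.pathTo v, rpcEll B x ≤ rpcEll B v) ∧ (B.pathTo v).Nodup := by
  intro n
  induction n with
  | zero =>
    intro v hv
    exact absurd hv (by have := rpcEll_pos B v; omega)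
  | succ n ih =>
    intro v hv
    by_cases hs : v = s
    · subst hs
      constructor
      · intro x hx
        rw [B.pathTo_src] at hx
        simp at hx; subst hx; exact le_refl _
      · rw [B.pathTo_src]; simp
    · have hstep := B.pathTo_step v hs
      have he : rpcEll B v = rpcEll B (B.b v) + 1 := rpcEll_step B hs
      have hle : rpcEll B (B.b v) ≤ n := by omega
      obtain ⟨h1, h2⟩ := ih (B.b v) hle
      constructor
      · intro x hx
        rw [hstep] at hx
        rcases List.mem_append.mp hx with h | h
        · exact le_trans (h1 x h) (by omega)
        · simp at h; subst h; exact le_refl _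
      · rw [hstep]
        refine List.Nodup.append h2 (List.nodup_singleton v) ?_
        intro a ha hb
        simp at hb; subst hb
        have := h1 _ ha; omega

lemma rpcEll_le [Fintype V] (v : V) : rpcEll B v ≤ Fintype.card V := by
  have h := (pathTo_bound B (rpcEll B v) v le_rfl).2
  exact h.length_le_card

lemma rpcSrc_stab : ∀ n x, rpcEll B x ≤ n + 1 →
    rpcSrc B F (n+1) x = rpcSrc B F n x := by
  intro n
  induction n with
  | zero =>
    intro x hx
    show (if rpcStep B F (B.b x) x then rpcSrc B F 0 (B.b x) else x) = x
    rw [if_neg]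
    intro h
    have := rpcStep_ell B F h
    have := rpcEll_pos B (B.b x)
    omega
  | succ n ih =>
    intro x hx
    by_cases h : rpcStep B F (B.b x) x
    · have hbx : rpcEll B (B.b x) ≤ n + 1 := by
        have := rpcStep_ell B F h; omega
      show (if rpcStep B F (B.b x) x then rpcSrc B F (n+1) (B.b x) else x)
          = (if rpcStep B F (B.b x) x then rpcSrc B F n (B.b x) else x)
      rw [if_pos h, if_pos h]
      exact ih _ hbx
    · show (if rpcStep B F (B.b x) x then rpcSrc B F (n+1) (B.b x) else x)
          = (if rpcStep B F (B.b x) x then rpcSrc B F n (B.b x) else x)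
      rw [if_neg h, if_neg h]

lemma rpcSrc_step {x y : V} (h : rpcStep B F x y) (n : ℕ) :
    rpcSrc B F (n+1) y = rpcSrc B F n x := by
  show (if rpcStep B F (B.b y) y then rpcSrc B F n (B.b y) else y) = rpcSrc B F n x
  rw [h.2.2.1, if_pos h]

lemma rpcSrc_eq_of_step [Fintype V] {x y : V} (h : rpcStep B F x y) :
    rpcSrc B F (Fintype.card V) x = rpcSrc B F (Fintype.card V) y := by
  have hpos : 1 ≤ Fintype.card V := Fintype.card_pos_iff.mpr ⟨x⟩
  obtain ⟨M, hM⟩ : ∃ M, Fintype.card V = M + 1 :=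
    ⟨Fintype.card V - 1, by omega⟩
  rw [hM, rpcSrc_step B F h M]
  exact rpcSrc_stab B F M x (by have := rpcEll_le B x; omega)

lemma rpcFwd_ne_nil (n : ℕ) (x : V) : rpcFwd B F n x ≠ [] := by
  cases n with
  | zero => simp [rpcFwd]
  | succ n =>
    show (if rpcStep B F x (F.f x) then x :: rpcFwd B F n (F.f x) else [x]) ≠ []
    split <;> simp

lemma self_mem_rpcFwd (n : ℕ) (x : V) : x ∈ rpcFwd B F n x := by
  cases n with
  | zero => simp [rpcFwd]
  | succ n =>
    show x ∈ (if rpcStep B F x (F.f x) then x :: rpcFwd B F n (F.f x) else [x])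
    split <;> simp

lemma rpcFwd_head (n : ℕ) (x : V) : (rpcFwd B F n x).head? = some x := by
  cases n with
  | zero => simp [rpcFwd]
  | succ n =>
    show (if rpcStep B F x (F.f x) then x :: rpcFwd B F n (F.f x) else [x]).head? = some x
    split <;> simp

lemma rpcFwd_chain : ∀ n x, (rpcFwd B F n x).Chain' (rpcStep B F) := by
  intro n
  induction n with
  | zero => intro x; simp [rpcFwd, List.Chain']
  | succ n ih =>
    intro x
    show ((if rpcStep B F x (F.f x) then x :: rpcFwd B F n (F.f x) else [x])).Chain' _
    split
    · rename_i h
      unfold List.Chain'; rw [List.isChain_cons]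
      refine ⟨?_, ih _⟩
      intro y hy
      rw [rpcFwd_head] at hy
      simp at hy; subst hy; exact h
    · simp [List.Chain']

lemma rpcFwd_step_mem : ∀ k u y z, y ∈ rpcFwd B F k u → rpcStep B F y z →
    z ∈ rpcFwd B F k u ∨ rpcEll B u + k = rpcEll B y := by
  intro k
  induction k with
  | zero =>
    intro u y z hy _
    right
    simp [rpcFwd] at hy; subst hy; omega
  | succ k ih =>
    intro u y z hy hz
    by_cases h : rpcStep B F u (F.f u)
    · have hrw : rpcFwd B F (k+1) u = u :: rpcFwd B F k (F.f u) := by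
        show (if rpcStep B F u (F.f u) then u :: rpcFwd B F k (F.f u) else [u]) = _
        rw [if_pos h]
      rw [hrw] at hy ⊢
      rcases List.mem_cons.mp hy with rfl | hy'
      · left
        have hzz := hz.2.2.2
        subst hzz
        exact List.mem_cons_of_mem _ (self_mem_rpcFwd B F k (F.f y))
      · rcases ih (F.f u) y z hy' hz with hmem | heq
        · exact Or.inl (List.mem_cons_of_mem _ hmem)
        · right
          have := rpcStep_ell B F h
          omega
    · have hrw : rpcFwd B F (k+1) u = [u] := by
        show (if rpcStep B F u (F.f u) then u :: rpcFwd B F k (F.f u) else [u]) = _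
        rw [if_neg h]
      rw [hrw] at hy
      simp at hy; subst hy
      have hzz := hz.2.2.2
      subst hzz
      exact absurd hz h

lemma mem_maxfwd [Fintype V] : ∀ n m x, Fintype.card V ≤ n + m →
    x ∈ rpcFwd B F (n + m) (rpcSrc B F n x) := by
  intro n
  induction n with
  | zero =>
    intro m x _
    simpa [rpcSrc] using self_mem_rpcFwd B F m x
  | succ n ih =>
    intro m x hcard
    by_cases h : rpcStep B F (B.b x) x
    · have hsrc : rpcSrc B F (n+1) x = rpcSrc B F n (B.b x) := by
        show (if rpcStep B F (B.b x) x then rpcSrc B F n (B.b x) else x) = _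
        rw [if_pos h]
      rw [hsrc]
      have hmem : B.b x ∈ rpcFwd B F (n + (m+1)) (rpcSrc B F n (B.b x)) :=
        ih (m+1) (B.b x) (by omega)
      rcases rpcFwd_step_mem B F (n+(m+1)) (rpcSrc B F n (B.b x)) (B.b x) x hmem h with
        hmem' | heq
      · have harith : n + 1 + m = n + (m+1) := by omega
        rw [harith]; exact hmem'
      · exfalso
        have h1 := rpcEll_pos B (rpcSrc B F n (B.b x))
        have h2 := rpcEll_le B (B.b x)
        omega
    · have hsrc : rpcSrc B F (n+1) x = x := by
        show (if rpcStep B F (B.b x) x then rpcSrc B F n (B.b x) else x) = _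
        rw [if_neg h]
      rw [hsrc]
      exact self_mem_rpcFwd B F (n+1+m) x

lemma chain_src_head [Fintype V] : ∀ (r : List V) (a : V),
    (a :: r).Chain' (rpcStep B F) →
    ∀ x ∈ a :: r, rpcSrc B F (Fintype.card V) x = rpcSrc B F (Fintype.card V) a := by
  intro r
  induction r with
  | nil =>
    intro a _ x hx
    simp at hx; subst hx; rfl
  | cons b l ih =>
    intro a hch x hx
    have hab : rpcStep B F a b := (List.isChain_cons_cons.mp hch).1
    have htail := (List.isChain_cons_cons.mp hch).2
    rcases List.mem_cons.mp hx with rfl | hx'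
    · rfl
    · rw [ih b htail x hx']
      exact (rpcSrc_eq_of_step B F hab).symm

lemma chain_src [Fintype V] : ∀ r : List V, r.Chain' (rpcStep B F) →
    ∀ x ∈ r, ∀ y ∈ r,
      rpcSrc B F (Fintype.card V) x = rpcSrc B F (Fintype.card V) y := by
  intro r hr x hx y hy
  cases r with
  | nil => simp at hx
  | cons a l =>
    rw [chain_src_head B F l a hr x hx, chain_src_head B F l a hr y hy]

end AuxRPC

/-- Maximal RPC uniqueness theorem: every vertex is a member of
exactly one maximal RPC: some maximal RPC contains it, and any two maximal RPCs
containing it have the same vertex set. -/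
theorem maximal_rpc_unique [Fintype V] [DecidableEq V]
    {E : V → V → Prop} {c : V → V → ℝ} {s t : V}
    (hc : ∀ u w, E u w → 0 ≤ c u w)
    (B : PredSPT E c s) (F : SuccSPT E c t) (v : V) :
    (∃ r, IsMaximalRPC B F r ∧ v ∈ r) ∧
    ∀ r₁ r₂, IsMaximalRPC B F r₁ → IsMaximalRPC B F r₂ → v ∈ r₁ → v ∈ r₂ →
      r₁.toFinset = r₂.toFinset := by
  set N := Fintype.card V with hN
  set r₀ := rpcFwd B F N (rpcSrc B F N v) with hr₀
  have hv₀ : v ∈ r₀ := by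
    have := mem_maxfwd B F N 0 v (by omega)
    simpa using this
  have hrpc₀ : IsRPC B F r₀ := ⟨rpcFwd_ne_nil B F N _, rpcFwd_chain B F N _⟩
  have key : ∀ r, IsRPC B F r → v ∈ r → r.toFinset ⊆ r₀.toFinset := by
    intro r hr hvr x hx
    rw [List.mem_toFinset] at hx ⊢
    have hsrc : rpcSrc B F N x = rpcSrc B F N v :=
      chain_src B F r hr.2 x hx v hvr
    rw [hr₀, ← hsrc]
    have := mem_maxfwd B F N 0 x (by omega)
    simpa using this
  constructor
  · refine ⟨r₀, ⟨hrpc₀, ?_⟩, hv₀⟩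
    intro r' hr' hsub
    have hv' : v ∈ r' := List.mem_toFinset.mp (hsub (List.mem_toFinset.mpr hv₀))
    exact Finset.Subset.antisymm (key r' hr' hv') hsub
  · intro r₁ r₂ h₁ h₂ hv₁ hv₂
    have e₁ : r₀.toFinset = r₁.toFinset := h₁.2 r₀ hrpc₀ (key r₁ h₁.1 hv₁)
    have e₂ : r₀.toFinset = r₂.toFinset := h₂.2 r₀ hrpc₀ (key r₂ h₂.1 hv₂)
    rw [← e₁, ← e₂]
end

section
/- The vertex sets of the maximal reciprocal pointer chains form a partition of V into pairwise disjoint nonempty subsets, and the number of blocks of this partition equals |Λ|, the number of distinct cascading via-paths. -/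
variable {V : Type*}

variable {E : V → V → Prop} {c : V → V → ℝ} {s t : V}

/-! ### Auxiliary development -/

namespace RPCAux

variable (B : PredSPT E c s) (F : SuccSPT E c t)

/-- The reciprocal-pointer step relation. -/
def Rrel (x y : V) : Prop := y ≠ s ∧ x ≠ t ∧ B.b y = x ∧ F.f x = y

/-- `v` can be extended backwards. -/
def Pex (v : V) : Prop := v ≠ s ∧ B.b v ≠ t ∧ F.f (B.b v) = v

/-- `v` can be extended forwards. -/
def Qex (v : V) : Prop := v ≠ t ∧ F.f v ≠ s ∧ B.b (F.f v) = v

variable {B F}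

lemma Rrel_of_Pex {v : V} (h : Pex B F v) : Rrel B F (B.b v) v :=
  ⟨h.1, h.2.1, rfl, h.2.2⟩

lemma Pex_of_Rrel {x y : V} (h : Rrel B F x y) : Pex B F y :=
  ⟨h.1, h.2.2.1 ▸ h.2.1, by rw [h.2.2.1]; exact h.2.2.2⟩

lemma Qex_of_Rrel {x y : V} (h : Rrel B F x y) : Qex B F x :=
  ⟨h.2.1, h.2.2.2 ▸ h.1, by rw [h.2.2.2]; exact h.2.2.1⟩

lemma Rrel_of_Qex {v : V} (h : Qex B F v) : Rrel B F v (F.f v) :=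
  ⟨h.2.1, h.1, h.2.2, rfl⟩

lemma pathTo_ne_nil (v : V) : B.pathTo v ≠ [] := (B.shortest v).1.1
lemma pathTo_head (v : V) : (B.pathTo v).head? = some s := (B.shortest v).1.2.1
lemma pathTo_last (v : V) : (B.pathTo v).getLast? = some v := (B.shortest v).1.2.2.1
lemma pathFrom_ne_nil (v : V) : F.pathFrom v ≠ [] := (F.shortest v).1.1
lemma pathFrom_head (v : V) : (F.pathFrom v).head? = some v := (F.shortest v).1.2.1

lemma pathTo_length_pos (v : V) : 0 < (B.pathTo v).length :=
  List.length_pos_iff.mpr (pathTo_ne_nil v)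

lemma pathFrom_length_pos (v : V) : 0 < (F.pathFrom v).length :=
  List.length_pos_iff.mpr (pathFrom_ne_nil v)

lemma pathTo_length_step {v : V} (h : v ≠ s) :
    (B.pathTo v).length = (B.pathTo (B.b v)).length + 1 := by
  rw [B.pathTo_step v h]; simp

lemma pathFrom_length_step {v : V} (h : v ≠ t) :
    (F.pathFrom v).length = (F.pathFrom (F.f v)).length + 1 := by
  rw [F.pathFrom_step v h]; simp

lemma pathFrom_cons (v : V) : F.pathFrom v = v :: (F.pathFrom v).tail := by
  cases h : F.pathFrom v with
  | nil => exact absurd h (pathFrom_ne_nil v)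
  | cons a l =>
    have := pathFrom_head (F := F) v
    rw [h] at this
    simp at this ⊢
    exact this

lemma pathTo_eq_dropLast (v : V) :
    B.pathTo v = (B.pathTo v).dropLast ++ [v] := by
  have h := pathTo_ne_nil (B := B) v
  have h2 := pathTo_last (B := B) v
  rw [List.getLast?_eq_getLast h] at h2
  have h3 : (B.pathTo v).getLast h = v := by injection h2
  conv_lhs => rw [← List.dropLast_append_getLast h, h3]

lemma pathTo_chain'_aux : ∀ (n : ℕ) (v : V), (B.pathTo v).length ≤ n →
    (B.pathTo v).Chain' (fun x y => y ≠ s ∧ B.b y = x)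
  | 0, v, h => absurd h (by simpa using (pathTo_length_pos (B := B) v).ne')
  | (n+1), v, h => by
    by_cases hv : v = s
    · subst hv; rw [B.pathTo_src]; simp [List.Chain']
    · rw [B.pathTo_step v hv]
      rw [List.Chain', List.isChain_append]
      refine ⟨pathTo_chain'_aux n (B.b v) ?_, by simp, ?_⟩
      · have := pathTo_length_step (B := B) hv; omega
      · intro x hx y hy
        rw [pathTo_last (B := B) (B.b v)] at hx
        simp at hx hy
        exact ⟨fun hne => hv (hy.trans hne), by rw [← hy, hx]⟩

lemma pathTo_chain' (v : V) : (B.pathTo v).Chain' (fun x y => y ≠ s ∧ B.b y = x) :=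
  pathTo_chain'_aux _ v le_rfl

lemma pathFrom_chain'_aux : ∀ (n : ℕ) (v : V), (F.pathFrom v).length ≤ n →
    (F.pathFrom v).Chain' (fun x y => x ≠ t ∧ F.f x = y)
  | 0, v, h => absurd h (by simpa using (pathFrom_length_pos (F := F) v).ne')
  | (n+1), v, h => by
    by_cases hv : v = t
    · subst hv; rw [F.pathFrom_tgt]; simp [List.Chain']
    · rw [F.pathFrom_step v hv]
      rw [List.Chain', List.isChain_cons]
      refine ⟨?_, pathFrom_chain'_aux n (F.f v) ?_⟩
      · intro y hy
        rw [pathFrom_head (F := F) (F.f v)] at hy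
        simp at hy
        exact ⟨hv, hy⟩
      · have := pathFrom_length_step (F := F) hv; omega

lemma pathFrom_chain' (v : V) : (F.pathFrom v).Chain' (fun x y => x ≠ t ∧ F.f x = y) :=
  pathFrom_chain'_aux _ v le_rfl

lemma CVP_eq (v : V) : CVP B F v = (B.pathTo v).dropLast ++ F.pathFrom v := by
  unfold CVP
  conv_lhs => rw [pathTo_eq_dropLast (B := B) v]
  rw [List.append_assoc]
  congr 1
  rw [pathFrom_cons (F := F) v]
  simp

lemma CVP_length (v : V) :
    (CVP B F v).length = ((B.pathTo v).length - 1) + (F.pathFrom v).length := by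
  rw [CVP_eq, List.length_append, List.length_dropLast]

lemma CVP_take (v : V) : (CVP B F v).take (B.pathTo v).length = B.pathTo v :=
  List.take_left

lemma CVP_drop (v : V) :
    (CVP B F v).drop ((B.pathTo v).length - 1) = F.pathFrom v := by
  rw [CVP_eq, ← List.length_dropLast]
  exact List.drop_left


variable (B F)

open Classical in
/-- The first vertex of the maximal RPC containing `v`. -/
noncomputable def rep (v : V) : V :=
  if h : Pex B F v then rep (B.b v) else v
termination_by (B.pathTo v).length
decreasing_by
  have := pathTo_length_step (B := B) h.1; omega

open Classical in
/-- The forward chain starting at `v`. -/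
noncomputable def chainF (v : V) : List V :=
  v :: (if h : Qex B F v then chainF (F.f v) else [])
termination_by (F.pathFrom v).length
decreasing_by
  have := pathFrom_length_step (F := F) h.1; omega

variable {B F}

lemma rep_eq_of_Pex {v : V} (h : Pex B F v) : rep B F v = rep B F (B.b v) := by
  rw [rep]; simp [h]

lemma rep_eq_of_not_Pex {v : V} (h : ¬ Pex B F v) : rep B F v = v := by
  rw [rep]; simp [h]

lemma not_Pex_rep_aux : ∀ (n : ℕ) (v : V), (B.pathTo v).length ≤ n →
    ¬ Pex B F (rep B F v)
  | 0, v, h => absurd h (by simpa using (pathTo_length_pos (B := B) v).ne')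
  | (n+1), v, h => by
    by_cases hv : Pex B F v
    · rw [rep_eq_of_Pex hv]
      exact not_Pex_rep_aux n (B.b v) (by have := pathTo_length_step (B := B) hv.1; omega)
    · rw [rep_eq_of_not_Pex hv]; exact hv

lemma not_Pex_rep (v : V) : ¬ Pex B F (rep B F v) := not_Pex_rep_aux _ v le_rfl

lemma rep_rep (v : V) : rep B F (rep B F v) = rep B F v :=
  rep_eq_of_not_Pex (not_Pex_rep v)

lemma reflTransGen_rep_aux : ∀ (n : ℕ) (v : V), (B.pathTo v).length ≤ n →
    Relation.ReflTransGen (Rrel B F) (rep B F v) v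
  | 0, v, h => absurd h (by simpa using (pathTo_length_pos (B := B) v).ne')
  | (n+1), v, h => by
    by_cases hv : Pex B F v
    · rw [rep_eq_of_Pex hv]
      exact (reflTransGen_rep_aux n (B.b v)
        (by have := pathTo_length_step (B := B) hv.1; omega)).tail (Rrel_of_Pex hv)
    · rw [rep_eq_of_not_Pex hv]

lemma reflTransGen_rep (v : V) : Relation.ReflTransGen (Rrel B F) (rep B F v) v :=
  reflTransGen_rep_aux _ v le_rfl

lemma rep_eq_of_Rrel {x y : V} (h : Rrel B F x y) : rep B F y = rep B F x := by
  have hP : Pex B F y := Pex_of_Rrel h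
  rw [rep_eq_of_Pex hP, h.2.2.1]

lemma rep_eq_of_reflTransGen {x y : V} (h : Relation.ReflTransGen (Rrel B F) x y) :
    rep B F y = rep B F x := by
  induction h with
  | refl => rfl
  | tail _ hR ih => rw [rep_eq_of_Rrel hR, ih]

lemma chainF_head (v : V) : ∃ l, chainF B F v = v :: l := by
  rw [chainF]; exact ⟨_, rfl⟩

lemma chainF_ne_nil (v : V) : chainF B F v ≠ [] := by
  obtain ⟨l, hl⟩ := chainF_head (B := B) (F := F) v; simp [hl]

lemma mem_chainF_self (v : V) : v ∈ chainF B F v := by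
  obtain ⟨l, hl⟩ := chainF_head (B := B) (F := F) v; simp [hl]

lemma chainF_eq_of_Qex {v : V} (h : Qex B F v) :
    chainF B F v = v :: chainF B F (F.f v) := by
  rw [chainF]; simp [h]

lemma chainF_eq_of_not_Qex {v : V} (h : ¬ Qex B F v) : chainF B F v = [v] := by
  rw [chainF]; simp [h]

lemma chainF_chain'_aux : ∀ (n : ℕ) (v : V), (F.pathFrom v).length ≤ n →
    (chainF B F v).Chain' (Rrel B F)
  | 0, v, h => absurd h (by simpa using (pathFrom_length_pos (F := F) v).ne')
  | (n+1), v, h => by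
    by_cases hv : Qex B F v
    · rw [chainF_eq_of_Qex hv, List.Chain', List.isChain_cons]
      refine ⟨?_, chainF_chain'_aux n (F.f v)
        (by have := pathFrom_length_step (F := F) hv.1; omega)⟩
      intro y hy
      obtain ⟨l, hl⟩ := chainF_head (B := B) (F := F) (F.f v)
      rw [hl] at hy; simp at hy; subst hy
      exact Rrel_of_Qex hv
    · rw [chainF_eq_of_not_Qex hv]; simp [List.Chain']

lemma chainF_chain' (v : V) : (chainF B F v).Chain' (Rrel B F) :=
  chainF_chain'_aux _ v le_rfl

lemma mem_of_reflTransGen_aux {w u : V} (h : Relation.ReflTransGen (Rrel B F) w u) :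
    u ∈ chainF B F w := by
  induction h using Relation.ReflTransGen.head_induction_on with
  | refl => exact mem_chainF_self u
  | head hR _ ih =>
    rename_i a b _
    rw [chainF_eq_of_Qex (Qex_of_Rrel hR), hR.2.2.2]
    exact List.mem_cons_of_mem _ ih

lemma chain'_reflTransGen_head {R : V → V → Prop} :
    ∀ (l : List V) (_ : l.Chain' R) (a : V) (_ : l.head? = some a) (u : V) (_ : u ∈ l),
      Relation.ReflTransGen R a u
  | [], _, a, ha, u, hu => by simp at hu
  | x :: rest, hl, a, ha, u, hu => by
    simp at ha; subst ha
    rcases List.mem_cons.mp hu with h | h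
    · subst h; exact Relation.ReflTransGen.refl
    · match rest, h with
      | y :: rest', h =>
        rw [List.Chain', List.isChain_cons_cons] at hl
        exact (chain'_reflTransGen_head (y :: rest') hl.2 y rfl u h).head hl.1

lemma rep_eq_of_mem_chainF {w u : V} (h : u ∈ chainF B F w) :
    rep B F u = rep B F w := by
  obtain ⟨l, hl⟩ := chainF_head (B := B) (F := F) w
  exact rep_eq_of_reflTransGen
    (chain'_reflTransGen_head _ (chainF_chain' w) w (by rw [hl]; rfl) u h)


lemma CVP_of_Rrel {x y : V} (h : Rrel B F x y) : CVP B F x = CVP B F y := by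
  obtain ⟨hys, hxt, hb, hf⟩ := h
  have h1 : B.pathTo y = B.pathTo x ++ [y] := by
    rw [B.pathTo_step y hys, hb]
  have h2 : F.pathFrom x = x :: F.pathFrom y := by
    rw [F.pathFrom_step x hxt, hf]
  rw [CVP_eq, CVP_eq, h1, h2, List.dropLast_concat]
  conv_rhs => rw [pathTo_eq_dropLast (B := B) x]
  rw [List.append_assoc]
  rfl

lemma CVP_of_reflTransGen {x y : V} (h : Relation.ReflTransGen (Rrel B F) x y) :
    CVP B F x = CVP B F y := by
  induction h with
  | refl => rfl
  | tail _ hR ih => rw [ih, CVP_of_Rrel hR]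

lemma CVP_rep (v : V) : CVP B F (rep B F v) = CVP B F v :=
  CVP_of_reflTransGen (reflTransGen_rep v)

lemma chain'_getElem? {R : V → V → Prop} {l : List V} (h : l.Chain' R) {i : ℕ} {x y : V}
    (hx : l[i]? = some x) (hy : l[i+1]? = some y) : R x y := by
  rw [List.getElem?_eq_some_iff] at hx hy
  obtain ⟨hi, hx⟩ := hx
  obtain ⟨hi', hy⟩ := hy
  rw [List.Chain', List.isChain_iff_getElem] at h
  have := h i (by omega)
  rw [hx, hy] at this
  exact this

lemma CVP_getElem?_pathTo {v : V} {i : ℕ} (hi : i < (B.pathTo v).length) :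
    (CVP B F v)[i]? = (B.pathTo v)[i]? := by
  show (B.pathTo v ++ (F.pathFrom v).tail)[i]? = _
  rw [List.getElem?_append]
  simp [hi]

lemma CVP_getElem?_pathFrom (v : V) (k : ℕ) :
    (CVP B F v)[(B.pathTo v).length - 1 + k]? = (F.pathFrom v)[k]? := by
  rw [CVP_eq, List.getElem?_append_right (by simp only [List.length_dropLast]; omega)]
  congr 1
  simp only [List.length_dropLast]
  omega

lemma CVP_getElem?_self (v : V) :
    (CVP B F v)[(B.pathTo v).length - 1]? = some v := by
  have h := CVP_getElem?_pathFrom (B := B) (F := F) v 0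
  simp only [Nat.add_zero] at h
  rw [h, pathFrom_cons (F := F) v]
  simp

/-- Key injectivity step: if `r'` cannot be extended backwards,
`CVP r = CVP r'`, and `r`'s tree path is no longer than `r'`'s, then `r = r'`. -/
lemma eq_of_CVP_eq_aux {r r' : V} (hP : ¬ Pex B F r')
    (hle : (B.pathTo r).length ≤ (B.pathTo r').length)
    (hcvp : CVP B F r = CVP B F r') : r = r' := by
  have hm1 : 1 ≤ (B.pathTo r).length := pathTo_length_pos r
  have hm'1 : 1 ≤ (B.pathTo r').length := pathTo_length_pos r'
  have h1 := CVP_getElem?_self (B := B) (F := F) r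
  have h2 := CVP_getElem?_self (B := B) (F := F) r'
  rcases eq_or_lt_of_le hle with heq | hlt
  · rw [← hcvp, ← heq, h1] at h2
    exact Option.some.inj h2
  · exfalso
    apply hP
    -- suffix view in CVP r at positions (m'-2, m'-1)
    have e1 : (CVP B F r)[(B.pathTo r').length - 2]? =
        (F.pathFrom r)[(B.pathTo r').length - 1 - (B.pathTo r).length]? := by
      have := CVP_getElem?_pathFrom (B := B) (F := F) r
        ((B.pathTo r').length - 1 - (B.pathTo r).length)
      rw [← this]
      congr 1
      omega
    have e2 : (CVP B F r)[(B.pathTo r').length - 1]? =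
        (F.pathFrom r)[(B.pathTo r').length - 1 - (B.pathTo r).length + 1]? := by
      have := CVP_getElem?_pathFrom (B := B) (F := F) r
        ((B.pathTo r').length - 1 - (B.pathTo r).length + 1)
      rw [← this]
      congr 1
      omega
    have e2' : (F.pathFrom r)[(B.pathTo r').length - 1 - (B.pathTo r).length + 1]?
        = some r' := by rw [← e2, hcvp, h2]
    have hklen := (List.getElem?_eq_some_iff.mp e2').1
    obtain ⟨x, hx⟩ : ∃ x,
        (F.pathFrom r)[(B.pathTo r').length - 1 - (B.pathTo r).length]? = some x :=
      ⟨_, List.getElem?_eq_getElem (by omega)⟩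
    have hchF : x ≠ t ∧ F.f x = r' :=
      chain'_getElem? (pathFrom_chain' (F := F) r) hx e2'
    -- prefix view in CVP r' at positions (m'-2, m'-1)
    have f1 : (CVP B F r')[(B.pathTo r').length - 2]? =
        (B.pathTo r')[(B.pathTo r').length - 2]? :=
      CVP_getElem?_pathTo (B := B) (F := F) (by omega)
    have f2 : (CVP B F r')[(B.pathTo r').length - 1]? =
        (B.pathTo r')[(B.pathTo r').length - 1]? :=
      CVP_getElem?_pathTo (B := B) (F := F) (by omega)
    have g1 : (B.pathTo r')[(B.pathTo r').length - 2]? = some x := by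
      rw [← f1, ← hcvp, e1, hx]
    have g2 : (B.pathTo r')[(B.pathTo r').length - 1]? = some r' := by
      rw [← f2, h2]
    have hj1 : (B.pathTo r').length - 2 + 1 = (B.pathTo r').length - 1 := by omega
    have hchB : r' ≠ s ∧ B.b r' = x :=
      chain'_getElem? (pathTo_chain' (B := B) r') g1 (by rw [hj1]; exact g2)
    exact ⟨hchB.1, hchB.2 ▸ hchF.1, by rw [hchB.2, hchF.2]⟩

/-- Full injectivity on representatives. -/
lemma eq_of_CVP_eq {r r' : V} (hr : ¬ Pex B F r) (hr' : ¬ Pex B F r')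
    (hcvp : CVP B F r = CVP B F r') : r = r' := by
  rcases le_total (B.pathTo r).length (B.pathTo r').length with h | h
  · exact eq_of_CVP_eq_aux hr' h hcvp
  · exact (eq_of_CVP_eq_aux hr h hcvp.symm).symm


lemma isRPC_chainF (v : V) : IsRPC B F (chainF B F v) :=
  ⟨chainF_ne_nil v, chainF_chain' v⟩

lemma reflTransGen_of_rpc {r : List V} (hr : IsRPC B F r) {u₀ : V}
    (h0 : r.head? = some u₀) {u : V} (hu : u ∈ r) :
    Relation.ReflTransGen (Rrel B F) u₀ u :=
  chain'_reflTransGen_head r hr.2 u₀ h0 u hu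

lemma mem_chainF_of_rpc {r : List V} (hr : IsRPC B F r) {u₀ : V}
    (h0 : r.head? = some u₀) {u : V} (hu : u ∈ r) :
    u ∈ chainF B F (rep B F u₀) :=
  mem_of_reflTransGen_aux ((reflTransGen_rep u₀).trans (reflTransGen_of_rpc hr h0 hu))

lemma rep_eq_of_mem_rpc {r : List V} (hr : IsRPC B F r) {u₀ : V}
    (h0 : r.head? = some u₀) {u : V} (hu : u ∈ r) :
    rep B F u = rep B F u₀ :=
  rep_eq_of_reflTransGen (reflTransGen_of_rpc hr h0 hu)

lemma head?_of_ne_nil {r : List V} (h : r ≠ []) : ∃ u₀, r.head? = some u₀ := by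
  cases r with
  | nil => exact absurd rfl h
  | cons a l => exact ⟨a, rfl⟩

lemma isMaximalRPC_chainF [DecidableEq V] (v : V) :
    IsMaximalRPC B F (chainF B F (rep B F v)) := by
  refine ⟨isRPC_chainF _, ?_⟩
  intro r' hr' hsub
  obtain ⟨u₀, h0⟩ := head?_of_ne_nil hr'.1
  have hrepmem : rep B F v ∈ r' := by
    have h1 : rep B F v ∈ chainF B F (rep B F v) := mem_chainF_self _
    have := hsub (List.mem_toFinset.mpr h1)
    exact List.mem_toFinset.mp this
  have hrep0 : rep B F v = rep B F u₀ := by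
    have := rep_eq_of_mem_rpc hr' h0 hrepmem
    rwa [rep_rep] at this
  refine Finset.Subset.antisymm ?_ hsub
  intro u hu
  rw [List.mem_toFinset] at hu ⊢
  have := mem_chainF_of_rpc hr' h0 hu
  rwa [← hrep0] at this

lemma maximalRPC_toFinset_eq [DecidableEq V] {r : List V} (hr : IsMaximalRPC B F r) :
    ∃ w : V, (∃ v, w = rep B F v) ∧ r.toFinset = (chainF B F w).toFinset := by
  obtain ⟨u₀, h0⟩ := head?_of_ne_nil hr.1.1
  refine ⟨rep B F u₀, ⟨u₀, rfl⟩, ?_⟩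
  have hsub : r.toFinset ⊆ (chainF B F (rep B F u₀)).toFinset := by
    intro u hu
    exact List.mem_toFinset.mpr (mem_chainF_of_rpc hr.1 h0 (List.mem_toFinset.mp hu))
  exact (hr.2 _ (isRPC_chainF _) hsub).symm

lemma rep_eq_of_chainF_toFinset_eq [DecidableEq V] {w w' : V}
    (h : (chainF B F w).toFinset = (chainF B F w').toFinset) :
    rep B F w = rep B F w' := by
  have : w ∈ chainF B F w' := by
    have := h ▸ List.mem_toFinset.mpr (mem_chainF_self (B := B) (F := F) w)
    exact List.mem_toFinset.mp this
  exact rep_eq_of_mem_chainF this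

end RPCAux

/-- The vertex sets of the maximal RPCs partition `V` into pairwise
disjoint nonempty blocks, and the number of blocks equals `|Λ|`, the number of
distinct cascading via-paths. -/
theorem maximal_rpc_partition [Fintype V] [DecidableEq V]
    {E : V → V → Prop} {c : V → V → ℝ} {s t : V}
    (hc : ∀ u w, E u w → 0 ≤ c u w)
    (B : PredSPT E c s) (F : SuccSPT E c t)
    (Pi : Set (Finset V)) (hPi : Pi = {S | ∃ r, IsMaximalRPC B F r ∧ S = r.toFinset})
    (Lam : Set (List V)) (hLam : Lam = {p | ∃ v, p = CVP B F v}) :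
    (∀ S ∈ Pi, S.Nonempty) ∧
    (∀ S₁ ∈ Pi, ∀ S₂ ∈ Pi, S₁ ≠ S₂ → Disjoint S₁ S₂) ∧
    (∀ v : V, ∃ S ∈ Pi, v ∈ S) ∧
    Pi.ncard = Lam.ncard := by
  classical
  open RPCAux in
  subst hPi hLam
  have hPiEq : {S | ∃ r, IsMaximalRPC B F r ∧ S = r.toFinset} =
      (fun w => (chainF B F w).toFinset) '' Set.range (rep B F) := by
    ext S
    constructor
    · rintro ⟨r, hr, rfl⟩
      obtain ⟨w, ⟨v, rfl⟩, hEq⟩ := maximalRPC_toFinset_eq hr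
      exact ⟨rep B F v, ⟨v, rfl⟩, hEq.symm⟩
    · rintro ⟨w, ⟨v, rfl⟩, rfl⟩
      exact ⟨chainF B F (rep B F v), isMaximalRPC_chainF v, rfl⟩
  refine ⟨?_, ?_, ?_, ?_⟩
  · rintro S ⟨r, hr, rfl⟩
    obtain ⟨u₀, h0⟩ := head?_of_ne_nil hr.1.1
    exact ⟨u₀, List.mem_toFinset.mpr (List.mem_of_mem_head? h0)⟩
  · rintro S₁ h₁ S₂ h₂ hne
    rw [hPiEq] at h₁ h₂
    obtain ⟨w₁, ⟨v₁, rfl⟩, rfl⟩ := h₁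
    obtain ⟨w₂, ⟨v₂, rfl⟩, rfl⟩ := h₂
    rw [Finset.disjoint_left]
    intro u hu₁ hu₂
    apply hne
    have e1 : rep B F u = rep B F v₁ := by
      have := rep_eq_of_mem_chainF (List.mem_toFinset.mp hu₁)
      rwa [rep_rep] at this
    have e2 : rep B F u = rep B F v₂ := by
      have := rep_eq_of_mem_chainF (List.mem_toFinset.mp hu₂)
      rwa [rep_rep] at this
    rw [← e1, e2]
  · intro v
    refine ⟨(chainF B F (rep B F v)).toFinset, ⟨chainF B F (rep B F v),
      isMaximalRPC_chainF v, rfl⟩, ?_⟩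
    exact List.mem_toFinset.mpr (mem_of_reflTransGen_aux (reflTransGen_rep v))
  · have hLamEq : {p | ∃ v, p = CVP B F v} = CVP B F '' Set.range (rep B F) := by
      ext p
      constructor
      · rintro ⟨v, rfl⟩
        exact ⟨rep B F v, ⟨v, rfl⟩, CVP_rep v⟩
      · rintro ⟨w, ⟨v, rfl⟩, rfl⟩
        exact ⟨rep B F v, rfl⟩
    rw [hPiEq, hLamEq]
    rw [Set.ncard_image_of_injOn, Set.ncard_image_of_injOn]
    · rintro w₁ ⟨v₁, rfl⟩ w₂ ⟨v₂, rfl⟩ h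
      have := eq_of_CVP_eq (not_Pex_rep v₁) (not_Pex_rep v₂) h
      exact this
    · rintro w₁ ⟨v₁, rfl⟩ w₂ ⟨v₂, rfl⟩ h
      have := rep_eq_of_chainF_toFinset_eq (B := B) (F := F) h
      rwa [rep_rep, rep_rep] at this
end

section
/- Let p^(1),…,p^(k) be pairwise distinct s–t paths with c(p^(1)) ≤ … ≤ c(p^(k)) such that every s–t path not equal to any p^(i) has cost at least c(p^(k)). If p^(k) contains a vertex v that does not lie on any p^(i) with i < k, then p^(k) is a via-path for v: c(p^(k)) = c(p_{s,v,t}), the minimum cost of an s–t path passing through v. -/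
variable {V : Type*}

variable {E : V → V → Prop} {c : V → V → ℝ} {s t : V}

/-- Let `p^(1), …, p^(k)` be pairwise distinct `s`–`t` paths with
nondecreasing costs such that every other `s`–`t` path has cost at least
`c(p^(k))`. If `p^(k)` contains a vertex `v` lying on no earlier `p^(i)`, then
`p^(k)` is a via-path for `v` (a minimum-cost `s`–`t` path through `v`). -/
theorem kth_shortest_is_via_path [Fintype V]
    {E : V → V → Prop} {c : V → V → ℝ} {s t : V}
    (hc : ∀ u w, E u w → 0 ≤ c u w)
    (hreach : ∀ v : V, ∃ p, IsPath E p s v)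
    (hcoreach : ∀ v : V, ∃ p, IsPath E p v t)
    (k : ℕ) (hk : 1 ≤ k) (P : Fin k → List V)
    (hinj : Function.Injective P)
    (hpath : ∀ i, IsPath E (P i) s t)
    (hmono : ∀ i j : Fin k, i ≤ j → pathCost c (P i) ≤ pathCost c (P j))
    (hrest : ∀ q, IsPath E q s t → (∀ i, q ≠ P i) →
      pathCost c (P ⟨k - 1, by omega⟩) ≤ pathCost c q)
    (v : V) (hv : v ∈ P ⟨k - 1, by omega⟩)
    (hvnew : ∀ i : Fin k, (i : ℕ) < k - 1 → v ∉ P i) :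
    IsViaPath E c s t v (P ⟨k - 1, by omega⟩) := by
  refine ⟨hpath _, hv, fun q hq hvq => ?_⟩
  by_cases h : ∀ i, q ≠ P i
  · exact hrest q hq h
  · push_neg at h
    obtain ⟨i, rfl⟩ := h
    have hik : ¬ (i : ℕ) < k - 1 := fun hlt => hvnew i hlt hvq
    exact hmono ⟨k - 1, by omega⟩ i (by
      simp only [Fin.le_def]; omega)
end

section
/- All paths shorter than a given cascading via-path include only nodes whose cascading via-paths are shorter: if q is an s–t path with c(q) < c(p̃_{s,v,t}) for some vertex v, then every vertex u lying on q satisfies c(p̃_{s,u,t}) < c(p̃_{s,v,t}). -/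
variable {V : Type*}

variable {E : V → V → Prop} {c : V → V → ℝ} {s t : V}

lemma pathCost_append_cons (co : V → V → ℝ) (p : List V) (x : V) (r : List V) :
    pathCost co (p ++ x :: r) = pathCost co (p ++ [x]) + pathCost co (x :: r) := by
  induction p with
  | nil => simp [pathCost]
  | cons a p ih =>
    cases p with
    | nil => simp [pathCost]
    | cons b p' =>
      have h1 : pathCost co (a :: b :: (p' ++ x :: r))
          = co a b + pathCost co (b :: (p' ++ x :: r)) := by simp [pathCost]
      have h2 : pathCost co (a :: b :: (p' ++ [x]))
          = co a b + pathCost co (b :: (p' ++ [x])) := by simp [pathCost]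
      simp only [List.cons_append] at *
      rw [h1, h2, ih]; ring

lemma pathCost_glue {co : V → V → ℝ} {p r : List V} {x : V}
    (hp : p.getLast? = some x) (hr : r.head? = some x) :
    pathCost co (p ++ r.tail) = pathCost co p + pathCost co r := by
  have hpne : p ≠ [] := by rintro rfl; simp at hp
  have hpe : p = p.dropLast ++ [x] := by
    conv_lhs => rw [← List.dropLast_append_getLast hpne]
    rw [List.getLast?_eq_getLast hpne] at hp
    simp [Option.some_inj.mp hp]
  have hre : r = x :: r.tail := by
    cases r with
    | nil => simp at hr
    | cons a r' => simp at hr; simp [hr]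
  calc pathCost co (p ++ r.tail) = pathCost co (p.dropLast ++ x :: r.tail) := by
        rw [hpe]; simp
    _ = pathCost co (p.dropLast ++ [x]) + pathCost co (x :: r.tail) :=
        pathCost_append_cons ..
    _ = pathCost co p + pathCost co r := by rw [← hpe, ← hre]

lemma pathCost_CVP {E : V → V → Prop} {c : V → V → ℝ} {s t : V}
    (B : PredSPT E c s) (F : SuccSPT E c t) (u : V) :
    pathCost c (CVP B F u) = pathCost c (B.pathTo u) + pathCost c (F.pathFrom u) := by
  exact pathCost_glue ((B.shortest u).1.2.2.1) ((F.shortest u).1.2.1)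

/-- All `s`–`t` paths shorter than a given CVP include only nodes
whose CVPs are shorter: if `c(q) < c(p̃_{s,v,t})`, then every vertex `u` on `q`
satisfies `c(p̃_{s,u,t}) < c(p̃_{s,v,t})`. -/
theorem shorter_paths_use_shorter_cvp_nodes [Fintype V] [DecidableEq V]
    {E : V → V → Prop} {c : V → V → ℝ} {s t : V}
    (hc : ∀ u w, E u w → 0 ≤ c u w)
    (B : PredSPT E c s) (F : SuccSPT E c t)
    (v : V) (q : List V) (hq : IsPath E q s t)
    (hlt : pathCost c q < pathCost c (CVP B F v)) :
    ∀ u ∈ q, pathCost c (CVP B F u) < pathCost c (CVP B F v) := by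
  intro u hu
  obtain ⟨a, b, rfl⟩ := List.append_of_mem hu
  obtain ⟨hne, hhead, hlast, hchain⟩ := hq
  obtain ⟨h1, h2⟩ := List.isChain_split.mp hchain
  have hp1 : IsPath E (a ++ [u]) s u := by
    refine ⟨by simp, ?_, (List.getLast?_concat (l := a)), h1⟩
    cases a with
    | nil => simpa using hhead
    | cons x a' => simpa using hhead
  have hp2 : IsPath E (u :: b) u t := by
    refine ⟨by simp, rfl, ?_, h2⟩
    rw [List.getLast?_append] at hlast
    simpa using hlast
  have hBu := (B.shortest u).2 _ hp1
  have hFu := (F.shortest u).2 _ hp2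
  have hsplit := pathCost_append_cons c a u b
  have hcvp := pathCost_CVP B F u
  linarith
end
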